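/- For every continuous function u : ℝⁿ → ℝ vanishing at infinity and every η ∈ ℝⁿ, one has lim_{t→∞} ∫_{ℝⁿ} ρ̃_t(ξ) u(η − ξ) dξ = u(η). -/

import Mathlib

open MeasureTheory Real Filter Topology

/-- `Q(t,ξ) := ∫₀ᵗ q(τ,ξ) dτ`. -/
noncomputable def Qint {n : ℕ} (q : ℝ → EuclideanSpace ℝ (Fin n) → ℝ)
    (t : ℝ) (ξ : EuclideanSpace ℝ (Fin n)) : ℝ :=
  ∫ τ in (0:ℝ)..t, q τ ξ

/-- The probability density `ρ̃_t(ξ) = e^{-Q(t,ξ)} / ∫ e^{-Q(t,ζ)} dζ`. -/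
noncomputable def rhoDens {n : ℕ} (q : ℝ → EuclideanSpace ℝ (Fin n) → ℝ)
    (t : ℝ) (ξ : EuclideanSpace ℝ (Fin n)) : ℝ :=
  Real.exp (-(Qint q t ξ)) / ∫ ζ, Real.exp (-(Qint q t ζ))

set_option maxHeartbeats 2000000 in
theorem stmt5 {n : ℕ} (hn : 1 ≤ n)
    (ψ : EuclideanSpace ℝ (Fin n) → ℝ) (hψ_cont : Continuous ψ)
    (hψ_pos : ∀ ξ, ξ ≠ 0 → 0 < ψ ξ)
    (hψ_infty : Tendsto ψ (cocompact (EuclideanSpace ℝ (Fin n))) atTop)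
    (hψ_growth : ∀ ε : ℝ, 0 < ε → ∃ Cε : ℝ, 0 ≤ Cε ∧ ∀ ξ, ψ ξ ≤ Cε * ‖ξ‖ ^ 2 + ε)
    (hψ_int : ∀ c : ℝ, 0 < c → Integrable (fun ξ => Real.exp (-(c * ψ ξ))))
    (q : ℝ → EuclideanSpace ℝ (Fin n) → ℝ)
    (hq_meas : Measurable (fun p : ℝ × EuclideanSpace ℝ (Fin n) => q p.1 p.2))
    (κ₀ κ₁ : ℝ) (hκ₀ : 0 < κ₀) (hκ : κ₀ ≤ κ₁)
    (hq_bound : ∀ τ, 0 ≤ τ → ∀ ξ, κ₀ * ψ ξ ≤ q τ ξ ∧ q τ ξ ≤ κ₁ * ψ ξ)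
    (u : EuclideanSpace ℝ (Fin n) → ℝ) (hu_cont : Continuous u)
    (hu_zero : Tendsto u (cocompact (EuclideanSpace ℝ (Fin n))) (𝓝 0))
    (η : EuclideanSpace ℝ (Fin n)) :
    Tendsto (fun t => ∫ ξ, rhoDens q t ξ * u (η - ξ)) atTop (𝓝 (u η)) := by
  have hκ₁ : 0 < κ₁ := lt_of_lt_of_le hκ₀ hκ
  -- ψ is nonnegative and vanishes at 0
  haveI : Nontrivial (EuclideanSpace ℝ (Fin n)) := by
    refine ⟨⟨EuclideanSpace.single ⟨0, hn⟩ (1:ℝ), 0, fun h => one_ne_zero (α := ℝ) ?_⟩⟩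
    simpa using congrArg (fun v => v ⟨0, hn⟩) h
  have hψ0le : ψ 0 ≤ 0 := by
    by_contra h
    push_neg at h
    obtain ⟨C, hC, hCb⟩ := hψ_growth (ψ 0 / 2) (by linarith)
    have h2 := hCb 0
    rw [norm_zero] at h2
    linarith
  have hψnn : ∀ ξ, 0 ≤ ψ ξ := by
    intro ξ
    rcases eq_or_ne ξ 0 with rfl | hne
    · haveI := Module.punctured_nhds_neBot ℝ (EuclideanSpace ℝ (Fin n))
        (0 : EuclideanSpace ℝ (Fin n))
      have h1 : Tendsto ψ (𝓝[≠] (0:EuclideanSpace ℝ (Fin n))) (𝓝 (ψ 0)) :=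
        (hψ_cont.tendsto 0).mono_left nhdsWithin_le_nhds
      refine ge_of_tendsto h1 ?_
      filter_upwards [self_mem_nhdsWithin] with x hx
      exact (hψ_pos x hx).le
    · exact (hψ_pos ξ hne).le
  have hψ0 : ψ 0 = 0 := le_antisymm hψ0le (hψnn 0)
  -- bounds on Qint
  have hQlb : ∀ t : ℝ, 0 ≤ t → ∀ ξ, (κ₀ * t) * ψ ξ ≤ Qint q t ξ ∧
      Qint q t ξ ≤ (κ₁ * t) * ψ ξ := by
    intro t ht ξ
    have hmeas : Measurable (fun τ => q τ ξ) :=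
      hq_meas.comp (measurable_id.prodMk measurable_const)
    have hbd : ∀ᵐ τ ∂(volume.restrict (Set.Ioc (0:ℝ) t)), ‖q τ ξ‖ ≤ κ₁ * ψ ξ := by
      rw [ae_restrict_iff' measurableSet_Ioc]
      filter_upwards with τ hτ
      obtain ⟨h1, h2⟩ := hq_bound τ hτ.1.le ξ
      rw [Real.norm_eq_abs, abs_le]
      constructor
      · nlinarith [hψnn ξ]
      · exact h2
    have hint : IntegrableOn (fun τ => q τ ξ) (Set.Ioc (0:ℝ) t) := by
      exact Integrable.mono' (integrable_const (κ₁ * ψ ξ)) hmeas.aestronglyMeasurable hbd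
    have hvol : (volume (Set.Ioc (0:ℝ) t)).toReal = t := by
      rw [Real.volume_Ioc]; simp [ht]
    constructor
    · rw [Qint, intervalIntegral.integral_of_le ht]
      calc (κ₀ * t) * ψ ξ = (volume (Set.Ioc (0:ℝ) t)).toReal • (κ₀ * ψ ξ) := by
            rw [hvol]; simp; ring
        _ = ∫ τ in Set.Ioc (0:ℝ) t, κ₀ * ψ ξ := (setIntegral_const _).symm
        _ ≤ ∫ τ in Set.Ioc (0:ℝ) t, q τ ξ := by
            refine setIntegral_mono_on ((integrableOn_const_iff (C := κ₀ * ψ ξ)).mpr (Or.inr ?_)) hint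
              measurableSet_Ioc fun τ hτ => (hq_bound τ hτ.1.le ξ).1
            rw [Real.volume_Ioc]; exact ENNReal.ofReal_lt_top
    · rw [Qint, intervalIntegral.integral_of_le ht]
      calc ∫ τ in Set.Ioc (0:ℝ) t, q τ ξ
          ≤ ∫ τ in Set.Ioc (0:ℝ) t, κ₁ * ψ ξ := by
            refine setIntegral_mono_on hint ((integrableOn_const_iff (C := κ₁ * ψ ξ)).mpr (Or.inr ?_))
              measurableSet_Ioc fun τ hτ => (hq_bound τ hτ.1.le ξ).2
            rw [Real.volume_Ioc]; exact ENNReal.ofReal_lt_top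
        _ = (κ₁ * t) * ψ ξ := by rw [setIntegral_const, measureReal_def, hvol]; simp; ring
  -- measurability of Qint
  have hQmeas : ∀ t : ℝ, 0 ≤ t → AEStronglyMeasurable (fun ξ => Qint q t ξ) volume := by
    intro t ht
    have h1 : StronglyMeasurable (fun p : EuclideanSpace ℝ (Fin n) × ℝ => q p.2 p.1) :=
      (hq_meas.comp measurable_swap).stronglyMeasurable
    have h2 := h1.integral_prod_right' (ν := volume.restrict (Set.Ioc (0:ℝ) t))
    have h3 : (fun ξ => Qint q t ξ) = fun ξ => ∫ τ, q τ ξ ∂(volume.restrict (Set.Ioc (0:ℝ) t)) := by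
      funext ξ
      rw [Qint, intervalIntegral.integral_of_le ht]
    rw [h3]
    exact h2.aestronglyMeasurable
  -- integrability of exp(-Q t ·)
  have hInt : ∀ t : ℝ, 0 < t → Integrable (fun ξ => Real.exp (-(Qint q t ξ))) := by
    intro t ht
    refine Integrable.mono' (hψ_int (κ₀ * t) (by positivity)) ?_ ?_
    · exact (Real.continuous_exp.comp_aestronglyMeasurable (hQmeas t ht.le).neg)
    · filter_upwards with ξ
      rw [Real.norm_eq_abs, abs_of_nonneg (Real.exp_pos _).le]
      exact Real.exp_le_exp.mpr (neg_le_neg (hQlb t ht.le ξ).1)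
  -- bound on u
  obtain ⟨M, hM0, hM⟩ : ∃ M : ℝ, 0 ≤ M ∧ ∀ x, |u x| ≤ M := by
    let f : ZeroAtInftyContinuousMap (EuclideanSpace ℝ (Fin n)) ℝ := ⟨⟨u, hu_cont⟩, hu_zero⟩
    exact ⟨‖f.toBCF‖, norm_nonneg _, fun x => by
      rw [← Real.norm_eq_abs]; exact f.toBCF.norm_coe_le_norm x⟩
  rw [Metric.tendsto_nhds]
  intro ε hε
  -- δ from continuity of u (η - ·) at 0
  have hcont0 : Tendsto (fun ξ : EuclideanSpace ℝ (Fin n) => u (η - ξ)) (𝓝 0) (𝓝 (u η)) := by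
    have hc : Continuous fun ξ : EuclideanSpace ℝ (Fin n) => u (η - ξ) :=
      hu_cont.comp (continuous_const.sub continuous_id)
    have h := hc.tendsto (0 : EuclideanSpace ℝ (Fin n))
    simpa using h
  have hev : ∀ᶠ ξ in 𝓝 (0 : EuclideanSpace ℝ (Fin n)), |u (η - ξ) - u η| < ε / 2 := by
    filter_upwards [Metric.tendsto_nhds.mp hcont0 (ε/2) (half_pos hε)] with ξ h
    rwa [Real.dist_eq] at h
  obtain ⟨δ, hδ0, hδ⟩ := Metric.eventually_nhds_iff.mp hev
  -- m : positive lower bound of ψ outside the δ-ball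
  obtain ⟨m, hm0, hm⟩ : ∃ m : ℝ, 0 < m ∧ ∀ ξ, δ ≤ ‖ξ‖ → m ≤ ψ ξ := by
    have h1 : ∀ᶠ ξ in cocompact (EuclideanSpace ℝ (Fin n)), (1:ℝ) ≤ ψ ξ :=
      hψ_infty.eventually (eventually_ge_atTop 1)
    obtain ⟨K, hK, hKs⟩ := mem_cocompact.mp h1
    obtain ⟨R, hR⟩ := hK.isBounded.subset_closedBall 0
    have hAc : IsCompact (Metric.closedBall (0 : EuclideanSpace ℝ (Fin n)) R \ Metric.ball 0 δ) :=
      (isCompact_closedBall 0 R).diff Metric.isOpen_ball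
    rcases (Metric.closedBall (0 : EuclideanSpace ℝ (Fin n)) R \
        Metric.ball 0 δ).eq_empty_or_nonempty with hAe | hAne
    · refine ⟨1, one_pos, fun ξ hξ => ?_⟩
      refine hKs fun hξK => ?_
      have h2 : ξ ∈ Metric.closedBall (0 : EuclideanSpace ℝ (Fin n)) R := hR hξK
      have h3 : ξ ∉ Metric.ball (0 : EuclideanSpace ℝ (Fin n)) δ := by
        simp only [Metric.mem_ball, dist_zero_right, not_lt]
        exact hξ
      exact Set.eq_empty_iff_forall_notMem.mp hAe ξ ⟨h2, h3⟩
    · obtain ⟨a, haA, hamin⟩ := hAc.exists_isMinOn hAne hψ_cont.continuousOn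
      have ha0 : a ≠ 0 := by
        intro h
        have := haA.2
        rw [h] at this
        exact this (Metric.mem_ball_self hδ0)
      refine ⟨min (ψ a) 1, lt_min (hψ_pos a ha0) one_pos, fun ξ hξ => ?_⟩
      by_cases hξR : ξ ∈ Metric.closedBall (0 : EuclideanSpace ℝ (Fin n)) R
      · have hmem : ξ ∈ Metric.closedBall (0 : EuclideanSpace ℝ (Fin n)) R \ Metric.ball 0 δ := by
          refine ⟨hξR, ?_⟩
          simp only [Metric.mem_ball, dist_zero_right, not_lt]
          exact hξ
        exact le_trans (min_le_left _ _) (hamin hmem)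
      · exact le_trans (min_le_right _ _) (hKs fun h => hξR (hR h))
  -- small ball where ψ < ε'
  set ε' := κ₀ * m / (2 * κ₁) with hε'def
  have hε'0 : 0 < ε' := by positivity
  have hκε' : κ₁ * ε' = κ₀ * m / 2 := by
    rw [hε'def]; field_simp
  clear_value ε'
  have hball : ∀ᶠ ζ in 𝓝 (0 : EuclideanSpace ℝ (Fin n)), ψ ζ < ε' := by
    have h := hψ_cont.tendsto 0
    rw [hψ0] at h
    exact h.eventually_lt_const hε'0
  obtain ⟨r, hr0, hr⟩ := Metric.eventually_nhds_iff.mp hball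
  set v := (volume (Metric.ball (0 : EuclideanSpace ℝ (Fin n)) r)).toReal with hvdef
  have hv0 : 0 < v := by
    rw [hvdef]
    exact ENNReal.toReal_pos (Metric.measure_ball_pos volume 0 hr0).ne' measure_ball_lt_top.ne
  set I₁ := ∫ ξ, Real.exp (-(κ₀ * ψ ξ)) with hI₁
  have hI₁0 : 0 ≤ I₁ := integral_nonneg fun ξ => (Real.exp_pos _).le
  set c := κ₀ * m / 2 with hcdef
  have hc0 : 0 < c := by rw [hcdef]; positivity
  clear_value c
  -- the decaying bound is eventually < ε
  have hGt : Tendsto (fun t : ℝ => ε/2 + (2*M) * ((I₁/v) * Real.exp (κ₀*m) * Real.exp (-(c*t))))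
      atTop (𝓝 (ε/2 + (2*M) * ((I₁/v) * Real.exp (κ₀*m) * 0))) := by
    apply tendsto_const_nhds.add
    apply Tendsto.const_mul
    apply Tendsto.const_mul
    exact tendsto_exp_neg_atTop_nhds_zero.comp (Tendsto.const_mul_atTop hc0 tendsto_id)
  have hGev : ∀ᶠ t in atTop,
      ε/2 + (2*M) * ((I₁/v) * Real.exp (κ₀*m) * Real.exp (-(c*t))) < ε :=
    Tendsto.eventually_lt_const (by rw [mul_zero, mul_zero, add_zero]; linarith) hGt
  filter_upwards [hGev, eventually_ge_atTop 1] with t htG ht1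
  have ht0 : (0:ℝ) < t := lt_of_lt_of_le one_pos ht1
  set Dt := ∫ ζ, Real.exp (-(Qint q t ζ)) with hDt
  have hIt := hInt t ht0
  -- lower bound for Dt
  have hDlb : v * Real.exp (-(κ₁ * ε' * t)) ≤ Dt := by
    have h1 : ∫ _ζ in Metric.ball (0 : EuclideanSpace ℝ (Fin n)) r, Real.exp (-(κ₁ * ε' * t)) ≤
        ∫ ζ in Metric.ball (0 : EuclideanSpace ℝ (Fin n)) r, Real.exp (-(Qint q t ζ)) := by
      refine setIntegral_mono_on ((integrableOn_const_iff (C := Real.exp (-(κ₁ * ε' * t)))).mpr (Or.inr measure_ball_lt_top))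
        hIt.integrableOn measurableSet_ball fun ζ hζ => ?_
      refine Real.exp_le_exp.mpr (neg_le_neg ?_)
      have h2 := (hQlb t ht0.le ζ).2
      have h3 : ψ ζ < ε' := hr (by simpa [dist_zero_right] using hζ)
      have h4 := hψnn ζ
      have h5 : (κ₁*t) * ψ ζ ≤ (κ₁*t) * ε' := mul_le_mul_of_nonneg_left h3.le (by positivity)
      nlinarith [h5]
    have h4 : ∫ _ζ in Metric.ball (0 : EuclideanSpace ℝ (Fin n)) r, Real.exp (-(κ₁ * ε' * t))
        = v * Real.exp (-(κ₁*ε'*t)) := by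
      rw [setIntegral_const, smul_eq_mul, hvdef, measureReal_def]
    have h5 : ∫ ζ in Metric.ball (0 : EuclideanSpace ℝ (Fin n)) r, Real.exp (-(Qint q t ζ)) ≤ Dt :=
      setIntegral_le_integral hIt (Filter.Eventually.of_forall fun ζ => (Real.exp_pos _).le)
    linarith
  have hD0 : 0 < Dt := lt_of_lt_of_le (mul_pos hv0 (Real.exp_pos _)) hDlb
  -- tail integral
  set S := {ξ : EuclideanSpace ℝ (Fin n) | δ ≤ ‖ξ‖} with hSdef
  have hSmeas : MeasurableSet S := (isClosed_le continuous_const continuous_norm).measurableSet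
  set Nt := ∫ ξ in S, Real.exp (-(Qint q t ξ)) with hNtdef
  have hNnn : 0 ≤ Nt := integral_nonneg fun ξ => (Real.exp_pos _).le
  have hNub : Nt ≤ Real.exp (-(κ₀ * m * (t - 1))) * I₁ := by
    have h1 : Nt ≤ ∫ ξ in S, Real.exp (-(κ₀*m*(t-1))) * Real.exp (-(κ₀ * ψ ξ)) := by
      refine setIntegral_mono_on hIt.integrableOn
        (((hψ_int κ₀ hκ₀).const_mul _).integrableOn) hSmeas fun ξ hξ => ?_
      rw [← Real.exp_add]
      refine Real.exp_le_exp.mpr ?_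
      have h2 := (hQlb t ht0.le ξ).1
      have h3 : m ≤ ψ ξ := hm ξ hξ
      nlinarith [mul_nonneg (mul_nonneg hκ₀.le (sub_nonneg.mpr ht1)) (sub_nonneg.mpr h3)]
    have h4 : ∫ ξ in S, Real.exp (-(κ₀*m*(t-1))) * Real.exp (-(κ₀ * ψ ξ))
        = Real.exp (-(κ₀*m*(t-1))) * ∫ ξ in S, Real.exp (-(κ₀*ψ ξ)) := integral_const_mul _ _
    have h5 : ∫ ξ in S, Real.exp (-(κ₀*ψ ξ)) ≤ I₁ :=
      setIntegral_le_integral (hψ_int κ₀ hκ₀) (.of_forall fun ξ => (Real.exp_pos _).le)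
    calc Nt ≤ _ := h1
      _ = _ := h4
      _ ≤ Real.exp (-(κ₀*m*(t-1))) * I₁ :=
          mul_le_mul_of_nonneg_left h5 (Real.exp_pos _).le
  -- density facts
  have hρnn : ∀ ξ, 0 ≤ rhoDens q t ξ := by
    intro ξ
    simp only [rhoDens, ← hDt]
    exact div_nonneg (Real.exp_pos _).le hD0.le
  have hρint : Integrable (rhoDens q t) := by
    have := hIt.div_const Dt
    exact this
  have hρone : ∫ ξ, rhoDens q t ξ = 1 := by
    simp only [rhoDens, ← hDt]
    rw [integral_div, ← hDt]
    exact div_self hD0.ne'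
  have hρS : ∫ ξ in S, rhoDens q t ξ = Nt / Dt := by
    simp only [rhoDens, ← hDt]
    rw [integral_div, ← hNtdef]
  have hui : Integrable (fun ξ => rhoDens q t ξ * u (η - ξ)) := by
    have hc : Continuous fun ξ : EuclideanSpace ℝ (Fin n) => u (η - ξ) :=
      hu_cont.comp (continuous_const.sub continuous_id)
    have h := hρint.bdd_mul hc.aestronglyMeasurable
      (Filter.Eventually.of_forall fun x => by simpa [Real.norm_eq_abs] using hM (η - x))
    simpa [mul_comm] using h
  have hsplit : ∫ ξ, rhoDens q t ξ * (u (η - ξ) - u η)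
      = (∫ ξ, rhoDens q t ξ * u (η - ξ)) - u η := by
    have heq : (fun ξ => rhoDens q t ξ * (u (η - ξ) - u η))
        = fun ξ => rhoDens q t ξ * u (η - ξ) - u η * rhoDens q t ξ := by
      funext ξ; ring
    rw [heq, integral_sub hui (hρint.const_mul (u η)), integral_const_mul, hρone, mul_one]
  have hptw : ∀ ξ, |rhoDens q t ξ * (u (η - ξ) - u η)|
      ≤ ε/2 * rhoDens q t ξ + (2*M) * S.indicator (rhoDens q t) ξ := by
    intro ξ
    rw [abs_mul, abs_of_nonneg (hρnn ξ)]
    by_cases hξ : ξ ∈ S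
    · rw [Set.indicator_of_mem hξ]
      have h1 : |u (η - ξ) - u η| ≤ 2*M := by
        calc |u (η - ξ) - u η| ≤ |u (η - ξ)| + |u η| := abs_sub _ _
          _ ≤ M + M := add_le_add (hM _) (hM _)
          _ = 2*M := by ring
      have h2 := mul_le_mul_of_nonneg_left h1 (hρnn ξ)
      nlinarith [hρnn ξ, half_pos hε]
    · rw [Set.indicator_of_notMem hξ, mul_zero, add_zero]
      have hξδ : ‖ξ‖ < δ := by
        have : ¬ δ ≤ ‖ξ‖ := hξ
        linarith [not_le.mp this]
      have h1 : |u (η - ξ) - u η| ≤ ε/2 := (hδ (by rwa [dist_zero_right])).le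
      calc rhoDens q t ξ * |u (η - ξ) - u η| ≤ rhoDens q t ξ * (ε/2) :=
            mul_le_mul_of_nonneg_left h1 (hρnn ξ)
        _ = ε/2 * rhoDens q t ξ := mul_comm _ _
  have habs : Integrable (fun ξ => |rhoDens q t ξ * (u (η - ξ) - u η)|) := by
    have h : Integrable (fun ξ => rhoDens q t ξ * (u (η - ξ) - u η)) := by
      simp only [mul_sub]
      exact hui.sub (hρint.mul_const (u η))
    exact h.abs
  have hRHSint : Integrable
      (fun ξ => ε/2 * rhoDens q t ξ + (2*M) * S.indicator (rhoDens q t) ξ) :=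
    (hρint.const_mul _).add ((hρint.indicator hSmeas).const_mul _)
  have hmain : |(∫ ξ, rhoDens q t ξ * u (η - ξ)) - u η| ≤ ε/2 + (2*M) * (Nt / Dt) := by
    rw [← hsplit]
    calc |∫ ξ, rhoDens q t ξ * (u (η - ξ) - u η)|
        ≤ ∫ ξ, |rhoDens q t ξ * (u (η - ξ) - u η)| := by
          simpa only [Real.norm_eq_abs] using
            norm_integral_le_integral_norm (μ := volume) (fun ξ => rhoDens q t ξ * (u (η - ξ) - u η))
      _ ≤ ∫ ξ, (ε/2 * rhoDens q t ξ + (2*M) * S.indicator (rhoDens q t) ξ) :=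
          integral_mono habs hRHSint hptw
      _ = ε/2 * (∫ ξ, rhoDens q t ξ) + (2*M) * ∫ ξ, S.indicator (rhoDens q t) ξ := by
          rw [integral_add (hρint.const_mul _) ((hρint.indicator hSmeas).const_mul _),
            integral_const_mul, integral_const_mul]
      _ = ε/2 + (2*M) * (Nt / Dt) := by
          rw [hρone, mul_one, integral_indicator hSmeas, hρS]
  have hquot : Nt / Dt ≤ (I₁/v) * Real.exp (κ₀*m) * Real.exp (-(c*t)) := by
    have h1 : Nt / Dt ≤ (Real.exp (-(κ₀*m*(t-1))) * I₁) / (v * Real.exp (-(κ₁*ε'*t))) :=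
      div_le_div₀ (mul_nonneg (Real.exp_pos _).le hI₁0) hNub (mul_pos hv0 (Real.exp_pos _)) hDlb
    have h2 : (Real.exp (-(κ₀*m*(t-1))) * I₁) / (v * Real.exp (-(κ₁*ε'*t)))
        = (I₁/v) * Real.exp (κ₀*m) * Real.exp (-(c*t)) := by
      rw [div_eq_iff (mul_pos hv0 (Real.exp_pos _)).ne']
      rw [show (I₁/v) * Real.exp (κ₀*m) * Real.exp (-(c*t)) * (v * Real.exp (-(κ₁*ε'*t)))
          = (I₁/v*v) * Real.exp (κ₀*m + -(c*t) + -(κ₁*ε'*t)) from by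
            rw [Real.exp_add, Real.exp_add]; ring]
      rw [div_mul_cancel₀ _ hv0.ne']
      rw [show κ₀*m + -(c*t) + -(κ₁*ε'*t) = -(κ₀*m*(t-1)) from by
            linear_combination (-t)*hκε' + (-2*t)*hcdef]
      ring
    rw [h2] at h1
    exact h1
  rw [Real.dist_eq]
  calc |(∫ ξ, rhoDens q t ξ * u (η - ξ)) - u η| ≤ ε/2 + (2*M) * (Nt / Dt) := hmain
    _ ≤ ε/2 + (2*M) * ((I₁/v) * Real.exp (κ₀*m) * Real.exp (-(c*t))) :=
        add_le_add le_rfl (mul_le_mul_of_nonneg_left hquot (by positivity))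
    _ < ε := htG
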